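/- For all integers m ≥ 2, n ≥ 1 and k ≥ 1, one has [w_{m−1,n,k}, x] = [z_{m,n}, x, (2^k−1)…, x] · w_{m,n+1,k} · z_{m+2^k−1, n+2^k−1}^{−1}. (Equation (3.3) of the paper, used in the proof of Lemma 3.3(i).) -/

import Mathlib

namespace Paper

variable {G : Type*} [Group G]

/-- The paper's commutator `[a,b] = a⁻¹ b⁻¹ a b`. -/
def pc {G : Type*} [Group G] (a b : G) : G := a⁻¹ * b⁻¹ * a * b

/-- The left-normed iterated commutator `[a, x, (r)…, x]`. -/
def itc {G : Type*} [Group G] (x a : G) : ℕ → G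
  | 0 => a
  | r + 1 => pc (itc x a r) x

/-- `c_i`, where `c_1 = y` and `c_{i+1} = [c_i, x]`; equivalently `c_i = [y, x, (i-1)…, x]`. -/
def cc (x y : G) (i : ℕ) : G := itc x y (i - 1)

/-- `z_{m,n} = [c_m, c_n]`. -/
def zz (x y : G) (m n : ℕ) : G := pc (cc x y m) (cc x y n)

/-- `H = ⟨c_i : i ≥ 1⟩`. -/
def Hsub (x y : G) : Subgroup G :=
  Subgroup.closure {g | ∃ i, 1 ≤ i ∧ g = cc x y i}

/-- `Z = ⟨c_l², z_{m,n} : l, m, n ≥ 1⟩`. -/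
def Zsub (x y : G) : Subgroup G :=
  Subgroup.closure ({g | ∃ l, 1 ≤ l ∧ g = cc x y l ^ 2} ∪
    {g | ∃ m n, 1 ≤ m ∧ 1 ≤ n ∧ g = zz x y m n})

/-- `w_{i,j,k} = ∏_{t=1}^{2^k−1} [z_{i+t,j+t−1}, x, (2^k−1−t)…, x]`,
factors in order of increasing `t` (reindexed by `t ↦ t+1`). -/
def ww (x y : G) (i j k : ℕ) : G :=
  ((List.range (2 ^ k - 1)).map
    (fun t => itc x (zz x y (i + t + 1) (j + t)) (2 ^ k - 2 - t))).prod

/-- `L_k`, the normal closure of `{w_{i,j,k} : i,j ≥ 1} ∪ {z_{m,n} : m ≥ 2^k, n ≥ 1}`. -/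
def Lsub (x y : G) (k : ℕ) : Subgroup G :=
  Subgroup.normalClosure ({g | ∃ i j, 1 ≤ i ∧ 1 ≤ j ∧ g = ww x y i j k} ∪
    {g | ∃ m n, 2 ^ k ≤ m ∧ 1 ≤ n ∧ g = zz x y m n})

/-- `Q_k = ⟨c_l² : l ≥ 2^{k−1}⟩`. -/
def Qsub (x y : G) (k : ℕ) : Subgroup G :=
  Subgroup.closure {g | ∃ l, 2 ^ (k - 1) ≤ l ∧ g = cc x y l ^ 2}

/-- `d_k(h) = [h,x,(2^k−1)…,x]⁻¹ · x^{−2^k} · (xh)^{2^k}`. -/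
def dd (x y : G) (k : ℕ) (h : G) : G :=
  (itc x h (2 ^ k - 1))⁻¹ * (x ^ 2 ^ k)⁻¹ * (x * h) ^ 2 ^ k

/-- `Γ^{2^k} = ⟨g^{2^k} : g ∈ Γ⟩`. -/
def pow2Sub (G : Type*) [Group G] (k : ℕ) : Subgroup G :=
  Subgroup.closure {g | ∃ a : G, g = a ^ 2 ^ k}

/-- `ζ(h₁,h₂) = ∏_{ℓ=0}^{2^k−2} [h₁^x, x, (ℓ)…, x, h₂, x, (2^k−2−ℓ)…, x]`,
factors in order of increasing `ℓ`. -/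
def zeta (x : G) (k : ℕ) (h₁ h₂ : G) : G :=
  ((List.range (2 ^ k - 1)).map
    (fun l => itc x (pc (itc x (x⁻¹ * h₁ * x) l) h₂) (2 ^ k - 2 - l))).prod


/-! ### Auxiliary lemmas -/

/-- The subgroup generated by the `z_{m,n}` alone. -/
def Z0 (x y : G) : Subgroup G :=
  Subgroup.closure {g | ∃ m n, 1 ≤ m ∧ 1 ≤ n ∧ g = zz x y m n}

lemma Z0_le_Zsub (x y : G) : Z0 x y ≤ Zsub x y :=
  Subgroup.closure_mono Set.subset_union_right

lemma cc_mem_H (x y : G) (i : ℕ) : cc x y i ∈ Hsub x y := by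
  rcases Nat.eq_zero_or_pos i with h | h
  · subst h
    exact Subgroup.subset_closure ⟨1, le_refl 1, rfl⟩
  · exact Subgroup.subset_closure ⟨i, h, rfl⟩

lemma zz_mem_H (x y : G) (m n : ℕ) : zz x y m n ∈ Hsub x y := by
  have h1 := cc_mem_H x y m
  have h2 := cc_mem_H x y n
  unfold zz pc
  exact mul_mem (mul_mem (mul_mem (inv_mem h1) (inv_mem h2)) h1) h2

lemma Zsub_le_Hsub (x y : G) : Zsub x y ≤ Hsub x y := by
  rw [Zsub, Subgroup.closure_le]
  rintro g (⟨l, _, rfl⟩ | ⟨m, n, _, _, rfl⟩)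
  · exact pow_mem (cc_mem_H x y l) 2
  · exact zz_mem_H x y m n

lemma zz_mem_Z0 (x y : G) {m n : ℕ} (hm : 1 ≤ m) (hn : 1 ≤ n) :
    zz x y m n ∈ Z0 x y :=
  Subgroup.subset_closure ⟨m, n, hm, hn, rfl⟩

lemma pc_mul_left' {a b c : G} (h : Commute (pc a c) b) :
    pc (a * b) c = pc a c * pc b c := by
  have h1 : pc (a * b) c = b⁻¹ * (pc a c * b) * pc b c := by unfold pc; group
  rw [h1, h.eq]
  group

lemma pc_mul_right' {a b c : G} (h : Commute (pc a b) c) :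
    pc a (b * c) = pc a c * pc a b := by
  have h1 : pc a (b * c) = pc a c * (c⁻¹ * (pc a b * c)) := by unfold pc; group
  rw [h1, h.eq]
  group

lemma pc_conj (x a b : G) : x⁻¹ * pc a b * x = pc (x⁻¹ * a * x) (x⁻¹ * b * x) := by
  unfold pc; group

lemma conj_cc (x y : G) {i : ℕ} (hi : 1 ≤ i) :
    x⁻¹ * cc x y i * x = cc x y i * cc x y (i + 1) := by
  have h : cc x y (i + 1) = pc (cc x y i) x := by
    unfold cc
    have e : i + 1 - 1 = (i - 1) + 1 := by omega
    rw [e]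
    rfl
  rw [h]; unfold pc; group

section WithHyp

variable (x y : G)
variable (hca : ∀ z ∈ Zsub x y, ∀ h ∈ Hsub x y, z * h = h * z)

include hca

lemma commZH {z h : G} (hz : z ∈ Zsub x y) (hh : h ∈ Hsub x y) : Commute z h :=
  hca z hz h hh

lemma pcx_zz_mem (m n : ℕ) (hm : 1 ≤ m) (hn : 1 ≤ n) :
    pc (zz x y m n) x ∈ Z0 x y := by
  have hzmem : ∀ i j : ℕ, 1 ≤ i → 1 ≤ j → zz x y i j ∈ Zsub x y :=
    fun i j hi hj => Z0_le_Zsub x y (zz_mem_Z0 x y hi hj)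
  set a := cc x y m
  set b := cc x y (m + 1)
  set c := cc x y n
  set d := cc x y (n + 1)
  have r1 : pc a (c * d) = pc a d * pc a c :=
    pc_mul_right' (commZH x y hca (hzmem m n hm hn) (cc_mem_H x y (n + 1)))
  have r2 : pc b (c * d) = pc b d * pc b c :=
    pc_mul_right' (commZH x y hca (hzmem (m + 1) n (by omega) hn) (cc_mem_H x y (n + 1)))
  have hmem1 : pc a (c * d) ∈ Zsub x y := by
    rw [r1]
    exact mul_mem (hzmem m (n + 1) hm (by omega)) (hzmem m n hm hn)
  have r3 : pc (a * b) (c * d) = pc a (c * d) * pc b (c * d) :=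
    pc_mul_left' (commZH x y hca hmem1 (cc_mem_H x y (m + 1)))
  have hconj : x⁻¹ * zz x y m n * x = pc (a * b) (c * d) := by
    rw [zz, pc_conj, conj_cc x y hm, conj_cc x y hn]
  have hexp : pc (zz x y m n) x = (zz x y m n)⁻¹ * (x⁻¹ * zz x y m n * x) := by
    unfold pc; group
  rw [hexp, hconj, r3, r1, r2]
  exact mul_mem (inv_mem (zz_mem_Z0 x y hm hn))
    (mul_mem (mul_mem (zz_mem_Z0 x y hm (by omega)) (zz_mem_Z0 x y hm hn))
      (mul_mem (zz_mem_Z0 x y (by omega) (by omega)) (zz_mem_Z0 x y (by omega) hn)))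

lemma pcx_mem {g : G} (hg : g ∈ Z0 x y) : pc g x ∈ Z0 x y := by
  have H : g ∈ Z0 x y ∧ pc g x ∈ Z0 x y := by
    refine Subgroup.closure_induction ?_ ?_ ?_ ?_ hg
    · rintro g ⟨m, n, hm, hn, rfl⟩
      exact ⟨zz_mem_Z0 x y hm hn, pcx_zz_mem x y hca m n hm hn⟩
    · constructor
      · exact one_mem _
      · have : pc (1 : G) x = 1 := by unfold pc; group
        rw [this]; exact one_mem _
    · rintro g h _ _ ⟨hg1, hg2⟩ ⟨hh1, hh2⟩
      refine ⟨mul_mem hg1 hh1, ?_⟩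
      have hc : Commute (pc g x) h :=
        commZH x y hca (Z0_le_Zsub x y hg2)
          (Zsub_le_Hsub x y (Z0_le_Zsub x y hh1))
      rw [pc_mul_left' hc]
      exact mul_mem hg2 hh2
    · rintro g _ ⟨hg1, hg2⟩
      refine ⟨inv_mem hg1, ?_⟩
      have hc : Commute (pc g x) g⁻¹ :=
        commZH x y hca (Z0_le_Zsub x y hg2)
          (Zsub_le_Hsub x y (Z0_le_Zsub x y (inv_mem hg1)))
      have h1 : pc (g * g⁻¹) x = pc g x * pc g⁻¹ x := pc_mul_left' hc
      have h2 : pc (g * g⁻¹) x = 1 := by simp [pc]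
      have h3 : pc g⁻¹ x = (pc g x)⁻¹ :=
        (inv_eq_of_mul_eq_one_right (h1 ▸ h2)).symm
      rw [h3]
      exact inv_mem hg2
  exact H.2

lemma itc_mem_Z0 {g : G} (hg : g ∈ Z0 x y) (r : ℕ) : itc x g r ∈ Z0 x y := by
  induction r with
  | zero => exact hg
  | succ r ih => exact pcx_mem x y hca ih

lemma pc_list_prod (L : List G) (hL : ∀ g ∈ L, g ∈ Z0 x y) :
    pc L.prod x = (L.map (fun g => pc g x)).prod := by
  induction L with
  | nil => simp [pc]
  | cons a L ih =>
    have ha : a ∈ Z0 x y := hL a List.mem_cons_self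
    have hL' : ∀ g ∈ L, g ∈ Z0 x y := fun g hg => hL g (List.mem_cons_of_mem a hg)
    have hprod : L.prod ∈ Hsub x y := by
      refine Subgroup.list_prod_mem _ ?_
      intro g hg
      exact Zsub_le_Hsub x y (Z0_le_Zsub x y (hL' g hg))
    have hc : Commute (pc a x) L.prod :=
      commZH x y hca (Z0_le_Zsub x y (pcx_mem x y hca ha)) hprod
    rw [List.prod_cons, pc_mul_left' hc, ih hL', List.map_cons, List.prod_cons]

end WithHyp

theorem eq_normal_w (x y : G)
    (hca : ∀ z ∈ Zsub x y, ∀ h ∈ Hsub x y, z * h = h * z)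
    (hz2 : ∀ z ∈ Zsub x y, z ^ 2 = 1)
    (m n k : ℕ) (hm : 2 ≤ m) (hn : 1 ≤ n) (hk : 1 ≤ k) :
    pc (ww x y (m - 1) n k) x =
      itc x (zz x y m n) (2 ^ k - 1) * ww x y m (n + 1) k *
        (zz x y (m + 2 ^ k - 1) (n + 2 ^ k - 1))⁻¹ := by
  have h2k2 : 2 ≤ 2 ^ k := by
    calc (2 : ℕ) = 2 ^ 1 := rfl
    _ ≤ 2 ^ k := Nat.pow_le_pow_right (by norm_num) hk
  set F : ℕ → G := fun t => itc x (zz x y (m + t) (n + t)) (2 ^ k - 1 - t) with hF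
  -- Step A: rewrite `ww (m-1) n k` with clean indices
  have hA : ww x y (m - 1) n k =
      ((List.range (2 ^ k - 1)).map
        (fun t => itc x (zz x y (m + t) (n + t)) (2 ^ k - 2 - t))).prod := by
    unfold ww
    congr 1
    apply List.map_congr_left
    intro t _
    have e : m - 1 + t + 1 = m + t := by omega
    rw [e]
  have memfac : ∀ g ∈ (List.range (2 ^ k - 1)).map
      (fun t => itc x (zz x y (m + t) (n + t)) (2 ^ k - 2 - t)), g ∈ Z0 x y := by
    intro g hg
    simp only [List.mem_map, List.mem_range] at hg
    obtain ⟨t, _, rfl⟩ := hg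
    exact itc_mem_Z0 x y hca (zz_mem_Z0 x y (by omega) (by omega)) _
  -- Step B: `pc (·) x` distributes over the product
  have hB : pc (ww x y (m - 1) n k) x =
      ((List.range (2 ^ k - 1)).map
        (fun t => pc (itc x (zz x y (m + t) (n + t)) (2 ^ k - 2 - t)) x)).prod := by
    rw [hA, pc_list_prod x y hca _ memfac, List.map_map]
    rfl
  -- Step C: each factor is `F t`
  have hC : ((List.range (2 ^ k - 1)).map
      (fun t => pc (itc x (zz x y (m + t) (n + t)) (2 ^ k - 2 - t)) x)).prod =
      ((List.range (2 ^ k - 1)).map F).prod := by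
    congr 1
    apply List.map_congr_left
    intro t ht
    rw [List.mem_range] at ht
    show pc (itc x (zz x y (m + t) (n + t)) (2 ^ k - 2 - t)) x =
      itc x (zz x y (m + t) (n + t)) (2 ^ k - 1 - t)
    have e : 2 ^ k - 1 - t = (2 ^ k - 2 - t) + 1 := by omega
    rw [e]
    rfl
  -- RHS pieces
  have hD1 : itc x (zz x y m n) (2 ^ k - 1) = F 0 := by
    show _ = itc x (zz x y (m + 0) (n + 0)) (2 ^ k - 1 - 0)
    norm_num
  have hD2 : ww x y m (n + 1) k =
      ((List.range (2 ^ k - 1)).map (fun t => F (t + 1))).prod := by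
    unfold ww
    congr 1
    apply List.map_congr_left
    intro t _
    show itc x (zz x y (m + t + 1) (n + 1 + t)) (2 ^ k - 2 - t) =
      itc x (zz x y (m + (t + 1)) (n + (t + 1))) (2 ^ k - 1 - (t + 1))
    have e1 : m + t + 1 = m + (t + 1) := by omega
    have e2 : n + 1 + t = n + (t + 1) := by omega
    have e3 : 2 ^ k - 2 - t = 2 ^ k - 1 - (t + 1) := by omega
    rw [e1, e2, e3]
  have hD3 : zz x y (m + 2 ^ k - 1) (n + 2 ^ k - 1) = F (2 ^ k - 1) := by
    show _ = itc x (zz x y (m + (2 ^ k - 1)) (n + (2 ^ k - 1))) (2 ^ k - 1 - (2 ^ k - 1))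
    have e : 2 ^ k - 1 - (2 ^ k - 1) = 0 := by omega
    have e1 : m + 2 ^ k - 1 = m + (2 ^ k - 1) := by omega
    have e2 : n + 2 ^ k - 1 = n + (2 ^ k - 1) := by omega
    rw [e, e1, e2]
    rfl
  -- the reindexing identity
  have key : ((List.range (2 ^ k - 1)).map F).prod * F (2 ^ k - 1) =
      F 0 * ((List.range (2 ^ k - 1)).map (fun t => F (t + 1))).prod := by
    have l1 : ((List.range (2 ^ k - 1 + 1)).map F).prod =
        ((List.range (2 ^ k - 1)).map F).prod * F (2 ^ k - 1) := by
      rw [List.range_succ]; simp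
    have l2 : ((List.range (2 ^ k - 1 + 1)).map F).prod =
        F 0 * ((List.range (2 ^ k - 1)).map (fun t => F (t + 1))).prod := by
      rw [List.range_succ_eq_map, List.map_cons, List.prod_cons, List.map_map]
      rfl
    rw [← l1, l2]
  rw [hB, hC, hD1, hD2, hD3, eq_mul_inv_iff_mul_eq]
  exact key

end Paper
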